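/- Fix a dimension d ≥ 1 and a locality radius δ > 0. For every ε > 0 there exists R such that for all r ≥ R the following holds: if G is any simple graph whose vertex set is the set of lattice points { (a_1,…,a_d) : a_i ∈ {0,1,…,r} } and whose edges only join pairs of vertices at Euclidean distance at most δ, then the algebraic connectivity of G satisfies λ2(L) ≤ ε. In other words, the algebraic connectivity of locally connected arrays on the lattice tends to 0 as the array size grows. -/

import Mathlib

open Matrix

open Classical in
/-- The Laplacian matrix of a simple graph: `L i i` is the degree of vertex `i`,
`L i j = -1` if `i` and `j` are adjacent, and `L i j = 0` otherwise. -/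
noncomputable def lap {V : Type*} [Fintype V] (G : SimpleGraph V) : Matrix V V ℝ :=
  Matrix.of fun i j =>
    if i = j then ({k | G.Adj i k}.ncard : ℝ) else if G.Adj i j then -1 else 0

/-- The algebraic connectivity `λ₂` : the second smallest eigenvalue of the Laplacian
(for at least 2 vertices), characterized as the minimum of `xᵀ L x` over real vectors
`x` with `∑ i, x i = 0` and `‖x‖ = 1`. -/
noncomputable def lambda2 {V : Type*} [Fintype V] (A : Matrix V V ℝ) : ℝ :=
  sInf {r : ℝ | ∃ x : V → ℝ, (∑ i, x i) = 0 ∧ (∑ i, (x i) ^ 2) = 1 ∧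
    r = x ⬝ᵥ A.mulVec x}

open Classical in
lemma lap_deg {V : Type*} [Fintype V] (G : SimpleGraph V) (i : V) :
    ({k | G.Adj i k}.ncard : ℝ) = ∑ j, (if G.Adj i j then (1:ℝ) else 0) := by
  rw [Finset.sum_boole, Set.ncard_eq_toFinset_card']
  have : {k | G.Adj i k}.toFinset = Finset.univ.filter (fun j => G.Adj i j) := by
    ext k; simp
  rw [this]

open Classical in
lemma lap_qf {V : Type*} [Fintype V] (G : SimpleGraph V) (x : V → ℝ) :
    2 * (x ⬝ᵥ (lap G).mulVec x) =
      ∑ i, ∑ j, (if G.Adj i j then (x i - x j)^2 else 0) := by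
  have h1 : x ⬝ᵥ (lap G).mulVec x
      = ∑ i, ∑ j, (if G.Adj i j then x i^2 - x i * x j else 0) := by
    unfold lap
    simp only [dotProduct, mulVec, Matrix.of_apply, Finset.mul_sum]
    have key : ∀ i j : V, x i * ((if i = j then ({k | G.Adj i k}.ncard : ℝ)
        else if G.Adj i j then -1 else 0) * x j)
        = (if i = j then ({k | G.Adj i k}.ncard : ℝ) * x i^2 else 0)
          + (if G.Adj i j then -(x i * x j) else 0) := by
      intro i j
      by_cases h : i = j
      · subst h; simp [G.irrefl]; ring
      · simp only [if_neg h]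
        by_cases h2 : G.Adj i j <;> simp [h2] <;> ring
    calc ∑ i, ∑ j, x i * ((if i = j then ({k | G.Adj i k}.ncard : ℝ)
          else if G.Adj i j then -1 else 0) * x j)
        = ∑ i, ∑ j, ((if i = j then ({k | G.Adj i k}.ncard : ℝ) * x i^2 else 0)
            + (if G.Adj i j then -(x i * x j) else 0)) := by
          exact Finset.sum_congr rfl fun i _ => Finset.sum_congr rfl fun j _ => key i j
      _ = ∑ i, (({k | G.Adj i k}.ncard : ℝ) * x i^2
            + ∑ j, (if G.Adj i j then -(x i * x j) else 0)) := by
          refine Finset.sum_congr rfl fun i _ => ?_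
          rw [Finset.sum_add_distrib, Finset.sum_ite_eq Finset.univ i
            (fun _ => ({k | G.Adj i k}.ncard : ℝ) * x i^2)]
          simp
      _ = ∑ i, ∑ j, (if G.Adj i j then x i^2 - x i * x j else 0) := by
          refine Finset.sum_congr rfl fun i _ => ?_
          rw [lap_deg, Finset.sum_mul, ← Finset.sum_add_distrib]
          refine Finset.sum_congr rfl fun j _ => ?_
          by_cases h2 : G.Adj i j <;> simp [h2] <;> ring
  have h2 : ∑ i, ∑ j, (if G.Adj i j then x i^2 - x i * x j else 0)
      = ∑ i, ∑ j, (if G.Adj i j then x j^2 - x j * x i else 0) := by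
    rw [Finset.sum_comm]
    refine Finset.sum_congr rfl fun i _ => Finset.sum_congr rfl fun j _ => ?_
    rw [G.adj_comm]
  calc 2 * (x ⬝ᵥ (lap G).mulVec x)
      = ∑ i, ∑ j, (if G.Adj i j then x i^2 - x i * x j else 0)
        + ∑ i, ∑ j, (if G.Adj i j then x j^2 - x j * x i else 0) := by
        rw [← h2, ← h1]; ring
    _ = ∑ i, ∑ j, (if G.Adj i j then (x i - x j)^2 else 0) := by
        rw [← Finset.sum_add_distrib]
        refine Finset.sum_congr rfl fun i _ => ?_
        rw [← Finset.sum_add_distrib]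
        refine Finset.sum_congr rfl fun j _ => ?_
        by_cases h : G.Adj i j <;> simp [h] <;> ring

lemma lambda2_le_of_witness {V : Type*} [Fintype V] (A : Matrix V V ℝ) (x : V → ℝ)
    (h0 : (∑ i, x i) = 0) (h1 : (∑ i, (x i) ^ 2) = 1) {ε : ℝ} (hε : 0 < ε)
    (hb : x ⬝ᵥ A.mulVec x ≤ ε) : lambda2 A ≤ ε := by
  have hmem : x ⬝ᵥ A.mulVec x ∈ {r : ℝ | ∃ x : V → ℝ, (∑ i, x i) = 0 ∧
      (∑ i, (x i) ^ 2) = 1 ∧ r = x ⬝ᵥ A.mulVec x} := ⟨x, h0, h1, rfl⟩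
  by_cases hbd : BddBelow {r : ℝ | ∃ x : V → ℝ, (∑ i, x i) = 0 ∧
      (∑ i, (x i) ^ 2) = 1 ∧ r = x ⬝ᵥ A.mulVec x}
  · exact le_trans (csInf_le hbd hmem) hb
  · rw [lambda2, Real.sInf_of_not_bddBelow hbd]; exact hε.le

open Classical in
lemma prod_ite_all {d : ℕ} (P : Fin d → Prop) :
    (∏ k, (if P k then (1:ℝ) else 0)) = if (∀ k, P k) then 1 else 0 := by
  by_cases h : ∀ k, P k
  · simp [h]
  · push_neg at h
    obtain ⟨k, hk⟩ := h
    rw [if_neg (fun hall => hk (hall k))]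
    exact Finset.prod_eq_zero (Finset.mem_univ k) (by simp [hk])

lemma pair_power (d : ℕ) {A : Type*} [Fintype A] (g : A → A → ℝ) :
    ∑ i : Fin d → A, ∑ j : Fin d → A, ∏ k, g (i k) (j k)
      = (∑ s : A, ∑ t : A, g s t) ^ d := by
  classical
  let e : (Fin d → A × A) ≃ (Fin d → A) × (Fin d → A) :=
    Equiv.arrowProdEquivProdArrow (Fin d) (fun _ => A) (fun _ => A)
  have h1 : ∑ q : (Fin d → A) × (Fin d → A), ∏ k, g (q.1 k) (q.2 k)
      = ∑ i : Fin d → A, ∑ j : Fin d → A, ∏ k, g (i k) (j k) :=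
    Fintype.sum_prod_type _
  rw [← h1]
  rw [← Equiv.sum_comp e (fun q : (Fin d → A) × (Fin d → A) => ∏ k, g (q.1 k) (q.2 k))]
  have hstep : ∀ p : Fin d → A × A, (∏ k, g ((e p).1 k) ((e p).2 k))
      = ∏ k, g ((p k).1) ((p k).2) := fun p => by
    simp [e, Equiv.arrowProdEquivProdArrow]
  simp only [hstep]
  have h2 : (∑ s : A, ∑ t : A, g s t) = ∑ q : A × A, g q.1 q.2 :=
    (Fintype.sum_prod_type (f := fun q : A × A => g q.1 q.2)).symm
  have h3 : ∏ _k : Fin d, (∑ q : A × A, g q.1 q.2)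
      = ∑ p : Fin d → A × A, ∏ k, g (p k).1 (p k).2 := by
    rw [Finset.prod_univ_sum (fun _ : Fin d => (Finset.univ : Finset (A × A)))
      (fun _ q => g q.1 q.2), Fintype.piFinset_univ]
  rw [h2, ← h3, Finset.prod_const, Finset.card_univ, Fintype.card_fin]


open Classical in
lemma close_pair_count (r : ℕ) (δ : ℝ) (hδ : 0 ≤ δ) :
    (∑ s : Fin (r+1), ∑ t : Fin (r+1),
      (if |((s:ℕ):ℝ) - ((t:ℕ):ℝ)| ≤ δ then (1:ℝ) else 0))
      ≤ ((r:ℝ)+1) * (2*(⌈δ⌉₊:ℝ)+1) := by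
  set D : ℕ := ⌈δ⌉₊ with hD
  have hinner : ∀ s : Fin (r+1),
      (∑ t : Fin (r+1), (if |((s:ℕ):ℝ) - ((t:ℕ):ℝ)| ≤ δ then (1:ℝ) else 0))
        ≤ 2*(D:ℝ)+1 := by
    intro s
    rw [Finset.sum_boole]
    have hcard : (Finset.univ.filter
        (fun t : Fin (r+1) => |((s:ℕ):ℝ) - ((t:ℕ):ℝ)| ≤ δ)).card ≤ 2*D+1 := by
      have hsub : ∀ t ∈ Finset.univ.filter
          (fun t : Fin (r+1) => |((s:ℕ):ℝ) - ((t:ℕ):ℝ)| ≤ δ),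
          (t : ℕ) ∈ Finset.Icc ((s:ℕ) - D) ((s:ℕ) + D) := by
        intro t ht
        rw [Finset.mem_filter] at ht
        have habs := ht.2
        rw [abs_le] at habs
        have hDle : δ ≤ (D:ℝ) := Nat.le_ceil δ
        have h1 : ((t:ℕ):ℝ) ≤ ((s:ℕ):ℝ) + (D:ℝ) := by linarith [habs.1]
        have h2 : ((s:ℕ):ℝ) ≤ ((t:ℕ):ℝ) + (D:ℝ) := by linarith [habs.2]
        have h1' : (t:ℕ) ≤ (s:ℕ) + D := by exact_mod_cast h1
        have h2' : (s:ℕ) ≤ (t:ℕ) + D := by exact_mod_cast h2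
        rw [Finset.mem_Icc]
        omega
      calc (Finset.univ.filter
          (fun t : Fin (r+1) => |((s:ℕ):ℝ) - ((t:ℕ):ℝ)| ≤ δ)).card
          ≤ (Finset.Icc ((s:ℕ) - D) ((s:ℕ) + D)).card := by
            exact Finset.card_le_card_of_injOn (fun t => (t:ℕ)) hsub
              (fun a _ b _ hab => Fin.val_injective hab)
        _ ≤ 2*D+1 := by rw [Nat.card_Icc]; omega
    calc ((Finset.univ.filter
        (fun t : Fin (r+1) => |((s:ℕ):ℝ) - ((t:ℕ):ℝ)| ≤ δ)).card : ℝ)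
        ≤ ((2*D+1 : ℕ) : ℝ) := by exact_mod_cast hcard
      _ = 2*(D:ℝ)+1 := by push_cast; ring
  calc (∑ s : Fin (r+1), ∑ t : Fin (r+1),
      (if |((s:ℕ):ℝ) - ((t:ℕ):ℝ)| ≤ δ then (1:ℝ) else 0))
      ≤ ∑ _s : Fin (r+1), (2*(D:ℝ)+1) := Finset.sum_le_sum fun s _ => hinner s
    _ = ((r:ℝ)+1) * (2*(D:ℝ)+1) := by
        rw [Finset.sum_const, Finset.card_univ, Fintype.card_fin, nsmul_eq_mul]
        push_cast; ring

lemma sum_fiber {d r : ℕ} (k0 : Fin d) (h : Fin (r+1) → ℝ) :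
    ∑ a : Fin d → Fin (r+1), h (a k0)
      = (Fintype.card ({j : Fin d // j ≠ k0} → Fin (r+1)) : ℝ) * ∑ t, h t := by
  classical
  let e : (Fin d → Fin (r+1)) ≃ Fin (r+1) × ({j : Fin d // j ≠ k0} → Fin (r+1)) :=
    Equiv.funSplitAt k0 (Fin (r+1))
  have h1 : ∑ a : Fin d → Fin (r+1), h (a k0)
      = ∑ p : Fin (r+1) × ({j : Fin d // j ≠ k0} → Fin (r+1)), h p.1 := by
    rw [← Equiv.sum_comp e.symm (fun a : Fin d → Fin (r+1) => h (a k0))]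
    refine Finset.sum_congr rfl fun p _ => ?_
    congr 1
    simp [e, Equiv.funSplitAt, Equiv.piSplitAt]
  rw [h1, Fintype.sum_prod_type]
  simp only [Finset.sum_const, Finset.card_univ, nsmul_eq_mul]
  rw [← Finset.mul_sum]

lemma card_aux (d r : ℕ) (hd : 1 ≤ d) (k0 : Fin d) :
    (Fintype.card ({j : Fin d // j ≠ k0} → Fin (r+1))) * (r+1) = (r+1)^d := by
  classical
  rw [Fintype.card_fun]
  have hsub : Fintype.card {j : Fin d // j ≠ k0} = d - 1 := by
    have := Fintype.card_subtype_compl (fun j : Fin d => j = k0)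
    simp only [Fintype.card_subtype_eq, Fintype.card_fin] at this
    exact this
  rw [hsub, Fintype.card_fin, ← pow_succ]
  congr 1
  omega

lemma sum_centered (r : ℕ) :
    ∑ t : Fin (r+1), (((t:ℕ):ℝ) - (r:ℝ)/2) = 0 := by
  rw [Finset.sum_sub_distrib]
  rw [Fin.sum_univ_eq_sum_range (fun i => ((i:ℕ):ℝ))]
  have hg : (∑ i ∈ Finset.range (r+1), ((i:ℕ):ℝ)) = ((r:ℝ)+1) * (r:ℝ) / 2 := by
    rw [← Nat.cast_sum]
    have h0 : (∑ i ∈ Finset.range (r+1), i) * 2 = (r+1) * r := by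
      simpa using Finset.sum_range_id_mul_two (r+1)
    have h2 : ((∑ i ∈ Finset.range (r+1), i : ℕ) : ℝ) * 2 = ((r:ℝ)+1) * r := by
      exact_mod_cast congrArg (Nat.cast : ℕ → ℝ) h0
    linarith
  rw [hg, Finset.sum_const, Finset.card_univ, Fintype.card_fin, nsmul_eq_mul]
  push_cast
  ring

/-- Locally connected arrays on the lattice points of the hypercube `[0,r]^d` (every edge
joins vertices at Euclidean distance at most `δ`) have algebraic connectivity tending
to `0` as the array size grows: for fixed `d ≥ 1` and `δ > 0`, for every `ε > 0` there
is an `R` such that for all `r ≥ R`, every such graph `G` has `λ₂(L(G)) ≤ ε`. -/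
theorem lambda2_local_lattice_tendsto_zero
    (d : ℕ) (hd : 1 ≤ d) (δ : ℝ) (hδ : 0 < δ) :
    ∀ ε : ℝ, 0 < ε → ∃ R : ℕ, ∀ r : ℕ, R ≤ r →
      ∀ G : SimpleGraph (Fin d → Fin (r + 1)),
        (∀ a b, G.Adj a b →
          Real.sqrt (∑ i, ((a i : ℝ) - (b i : ℝ)) ^ 2) ≤ δ) →
        lambda2 (lap G) ≤ ε := by
  classical
  intro ε hε
  set D : ℕ := ⌈δ⌉₊ with hD
  set B : ℝ := δ^2 * (2*(D:ℝ)+1)^d with hB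
  have hB0 : 0 ≤ B := by rw [hB]; positivity
  refine ⟨⌈8 * B / ε⌉₊ + 1, fun r hr G hG => ?_⟩
  have hr1 : 1 ≤ r := le_trans (by omega) hr
  have hrpos : (0:ℝ) < r := by exact_mod_cast Nat.pos_of_ne_zero (by omega)
  set k0 : Fin d := ⟨0, hd⟩ with hk0
  set T : ℝ := ∑ t : Fin (r+1), (((t:ℕ):ℝ) - (r:ℝ)/2)^2 with hT
  set C : ℕ := Fintype.card ({j : Fin d // j ≠ k0} → Fin (r+1)) with hC
  have hTlb : (r:ℝ)^2/4 ≤ T := by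
    have h0 : (((0 : Fin (r+1)) : ℕ):ℝ) = 0 := by simp
    have hle := Finset.single_le_sum
      (f := fun t : Fin (r+1) => (((t:ℕ):ℝ) - (r:ℝ)/2)^2)
      (fun t _ => sq_nonneg _) (Finset.mem_univ (0 : Fin (r+1)))
    calc (r:ℝ)^2/4 = ((((0:Fin (r+1)):ℕ):ℝ) - (r:ℝ)/2)^2 := by rw [h0]; ring
      _ ≤ T := hle
  have hT0 : 0 < T := lt_of_lt_of_le (by positivity) hTlb
  have hC0 : 0 < (C:ℝ) := by
    have : 0 < C := Fintype.card_pos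
    exact_mod_cast this
  set S : ℝ := (C:ℝ) * T with hS
  have hS0 : 0 < S := mul_pos hC0 hT0
  set c : ℝ := (Real.sqrt S)⁻¹ with hc
  have hc2 : c^2 = S⁻¹ := by rw [hc, inv_pow, Real.sq_sqrt hS0.le]
  set x : (Fin d → Fin (r+1)) → ℝ := fun a => c * (((a k0 : ℕ):ℝ) - (r:ℝ)/2) with hx
  have hsum0 : (∑ a, x a) = 0 := by
    simp only [hx]
    rw [← Finset.mul_sum, sum_fiber k0 (fun t => ((t:ℕ):ℝ) - (r:ℝ)/2), sum_centered]
    ring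
  have hSval : ∑ a : Fin d → Fin (r+1), ((((a k0 : ℕ)):ℝ) - (r:ℝ)/2)^2 = S := by
    rw [sum_fiber k0 (fun t => (((t:ℕ):ℝ) - (r:ℝ)/2)^2), hS, hC, hT]
  have hsq : (∑ a, (x a)^2) = 1 := by
    simp only [hx, mul_pow]
    rw [← Finset.mul_sum, hSval, hc2]
    exact inv_mul_cancel₀ hS0.ne'
  apply lambda2_le_of_witness _ x hsum0 hsq hε
  have hcoord : ∀ a b : Fin d → Fin (r+1), G.Adj a b → ∀ k : Fin d,
      |((a k : ℕ):ℝ) - ((b k : ℕ):ℝ)| ≤ δ := by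
    intro a b hab k
    have h2 : (0:ℝ) ≤ ∑ i, (((a i:ℕ):ℝ) - ((b i:ℕ):ℝ))^2 := by positivity
    have hsumle : (∑ i, (((a i:ℕ):ℝ) - ((b i:ℕ):ℝ))^2) ≤ δ^2 := by
      have h1 := hG a b hab
      nlinarith [Real.sq_sqrt h2,
        Real.sqrt_nonneg (∑ i, (((a i:ℕ):ℝ) - ((b i:ℕ):ℝ))^2)]
    have hk : (((a k:ℕ):ℝ) - ((b k:ℕ):ℝ))^2 ≤ δ^2 :=
      le_trans (Finset.single_le_sum
        (f := fun i : Fin d => (((a i:ℕ):ℝ) - ((b i:ℕ):ℝ))^2)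
        (fun i _ => sq_nonneg _) (Finset.mem_univ k)) hsumle
    calc |((a k:ℕ):ℝ) - ((b k:ℕ):ℝ)|
        = Real.sqrt ((((a k:ℕ):ℝ) - ((b k:ℕ):ℝ))^2) := (Real.sqrt_sq_eq_abs _).symm
      _ ≤ Real.sqrt (δ^2) := Real.sqrt_le_sqrt hk
      _ = δ := Real.sqrt_sq hδ.le
  have hterm : ∀ i j : Fin d → Fin (r+1), (if G.Adj i j then (x i - x j)^2 else 0)
      ≤ c^2*δ^2 * ∏ k, (if |((i k:ℕ):ℝ) - ((j k:ℕ):ℝ)| ≤ δ then (1:ℝ) else 0) := by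
    intro i j
    by_cases h : G.Adj i j
    · have hprod : (∏ k, (if |((i k:ℕ):ℝ) - ((j k:ℕ):ℝ)| ≤ δ then (1:ℝ) else 0)) = 1 := by
        rw [Finset.prod_congr rfl (fun k _ => if_pos (hcoord i j h k))]
        exact Finset.prod_const_one
      rw [if_pos h, hprod, mul_one]
      have hxe : (x i - x j)^2 = c^2 * (((i k0:ℕ):ℝ) - ((j k0:ℕ):ℝ))^2 := by
        simp only [hx]; ring
      have hkk := hcoord i j h k0
      have hsq2 : (((i k0:ℕ):ℝ) - ((j k0:ℕ):ℝ))^2 ≤ δ^2 := by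
        calc (((i k0:ℕ):ℝ) - ((j k0:ℕ):ℝ))^2
            = |((i k0:ℕ):ℝ) - ((j k0:ℕ):ℝ)|^2 := (sq_abs _).symm
          _ ≤ δ^2 := by
              apply pow_le_pow_left₀ (abs_nonneg _) hkk
      rw [hxe]
      exact mul_le_mul_of_nonneg_left hsq2 (sq_nonneg c)
    · rw [if_neg h]
      positivity
  have hqf2 : 2 * (x ⬝ᵥ (lap G).mulVec x) ≤ c^2*δ^2 * (((r:ℝ)+1) * (2*(D:ℝ)+1))^d := by
    rw [lap_qf]
    calc ∑ i, ∑ j, (if G.Adj i j then (x i - x j)^2 else 0)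
        ≤ ∑ i : Fin d → Fin (r+1), ∑ j : Fin d → Fin (r+1),
            c^2*δ^2 * ∏ k, (if |((i k:ℕ):ℝ) - ((j k:ℕ):ℝ)| ≤ δ then (1:ℝ) else 0) :=
          Finset.sum_le_sum fun i _ => Finset.sum_le_sum fun j _ => hterm i j
      _ = c^2*δ^2 * ∑ i : Fin d → Fin (r+1), ∑ j : Fin d → Fin (r+1),
            ∏ k, (if |((i k:ℕ):ℝ) - ((j k:ℕ):ℝ)| ≤ δ then (1:ℝ) else 0) := by
          simp only [← Finset.mul_sum]
      _ = c^2*δ^2 * (∑ s : Fin (r+1), ∑ t : Fin (r+1),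
            (if |((s:ℕ):ℝ) - ((t:ℕ):ℝ)| ≤ δ then (1:ℝ) else 0))^d := by
          rw [pair_power d (A := Fin (r+1)) (fun s t => if |((s:ℕ):ℝ) - ((t:ℕ):ℝ)| ≤ δ then (1:ℝ) else 0)]
      _ ≤ c^2*δ^2 * (((r:ℝ)+1) * (2*(D:ℝ)+1))^d := by
          apply mul_le_mul_of_nonneg_left _ (by positivity)
          apply pow_le_pow_left₀ _ (close_pair_count r δ hδ.le)
          apply Finset.sum_nonneg
          intro s _
          apply Finset.sum_nonneg
          intro t _
          positivity
  have hQF0 : 0 ≤ x ⬝ᵥ (lap G).mulVec x := by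
    have hid := lap_qf G x
    have hnn : 0 ≤ ∑ i, ∑ j, (if G.Adj i j then (x i - x j)^2 else 0) := by
      apply Finset.sum_nonneg
      intro i _
      apply Finset.sum_nonneg
      intro j _
      positivity
    linarith
  have hpow : ((r:ℝ)+1)^d = (C:ℝ) * ((r:ℝ)+1) := by
    have h1 := card_aux d r hd k0
    exact_mod_cast h1.symm
  have hXval : c^2*δ^2 * (((r:ℝ)+1) * (2*(D:ℝ)+1))^d = B * ((r:ℝ)+1) / T := by
    rw [hc2, hS, hB, mul_pow, hpow]
    field_simp
  have hfinal : B * ((r:ℝ)+1) / T ≤ ε := by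
    have hr2 : (r:ℝ) + 1 ≤ 2 * r := by
      have h1 : (1:ℝ) ≤ r := by exact_mod_cast hr1
      linarith
    have hA : B * ((r:ℝ)+1) / T ≤ B * (2*(r:ℝ)) / ((r:ℝ)^2/4) := by
      gcongr
    have hB2 : B * (2*(r:ℝ)) / ((r:ℝ)^2/4) = 8*B/(r:ℝ) := by
      field_simp
      ring
    have hceil : 8*B/ε ≤ (r:ℝ) := by
      have h1 : (⌈8*B/ε⌉₊:ℝ) ≤ r := by
        have h2 : ⌈8*B/ε⌉₊ ≤ r := by omega
        exact_mod_cast h2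
      linarith [Nat.le_ceil (8*B/ε)]
    have h3 : 8*B/(r:ℝ) ≤ ε := by
      rw [div_le_iff₀ hrpos]
      have h4 := (div_le_iff₀ hε).mp hceil
      linarith
    linarith [hA, hB2 ▸ hA]
  have h2e : 2 * (x ⬝ᵥ (lap G).mulVec x) ≤ B * ((r:ℝ)+1) / T := by
    rw [← hXval]
    exact hqf2
  linarith
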